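/- Equality I(X_{C_1∪C_2}) + I(X_{C_1∩C_2}) = I(X_{C_1}) + I(X_{C_2}) holds if and only if X_{C_1\C_2} and X_{C_2\C_1} are conditionally independent given X_{C_1∩C_2}. -/

import Mathlib

open Real Finset

/-- Shannon entropy of a (probability mass) function on a finite type. -/
noncomputable def entH {α : Type*} [Fintype α] (q : α → ℝ) : ℝ :=
  ∑ x, Real.negMulLog (q x)

/-- Marginal of `p` on the coordinate set `A`. -/
noncomputable def marg {V Λ : Type*} [Fintype V] [DecidableEq V] [Fintype Λ] [DecidableEq Λ]
    (p : (V → Λ) → ℝ) (A : Finset V) : (A → Λ) → ℝ :=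
  fun y => ∑ x : V → Λ, if ∀ i : A, x i.1 = y i then p x else 0

/-- Marginal probability of the `A`-part of the full realization `x`. -/
noncomputable def margAt {V Λ : Type*} [Fintype V] [DecidableEq V] [Fintype Λ] [DecidableEq Λ]
    (p : (V → Λ) → ℝ) (A : Finset V) (x : V → Λ) : ℝ :=
  marg p A (fun i => x i.1)

/-- Information content `I(X_A) = ∑_{i∈A} H(X_i) − H(X_A)`
(this formula automatically gives `0` when `|A| < 2`). -/
noncomputable def info {V Λ : Type*} [Fintype V] [DecidableEq V] [Fintype Λ] [DecidableEq Λ]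
    (p : (V → Λ) → ℝ) (A : Finset V) : ℝ :=
  (∑ i ∈ A, entH (marg p {i})) - entH (marg p A)

/-- Kullback–Leibler divergence. -/
noncomputable def KL {α : Type*} [Fintype α] (q r : α → ℝ) : ℝ :=
  ∑ x, q x * Real.log (q x / r x)

section aux
variable {V Λ : Type*} [Fintype V] [DecidableEq V] [Fintype Λ] [DecidableEq Λ]

lemma marg_nonneg (p : (V → Λ) → ℝ) (hp : ∀ x, 0 ≤ p x) (A : Finset V) (y : A → Λ) :
    0 ≤ marg p A y :=
  Finset.sum_nonneg fun x _ => by split <;> simp [hp x]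

lemma le_margAt (p : (V → Λ) → ℝ) (hp : ∀ x, 0 ≤ p x) (A : Finset V) (x : V → Λ) :
    p x ≤ margAt p A x := by
  unfold margAt marg
  have h := Finset.single_le_sum
    (f := fun x' : V → Λ => if ∀ i : A, x' i.1 = x i.1 then p x' else 0)
    (fun x' _ => by split <;> simp [hp x']) (Finset.mem_univ x)
  simpa using h

lemma marg_mono (p : (V → Λ) → ℝ) (hp : ∀ x, 0 ≤ p x) {A B : Finset V} (hAB : A ⊆ B)
    (u : B → Λ) :
    marg p B u ≤ marg p A (fun i => u ⟨i.1, hAB i.2⟩) := by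
  unfold marg
  apply Finset.sum_le_sum
  intro x _
  by_cases h : ∀ i : B, x i.1 = u i
  · rw [if_pos h, if_pos fun i : A => h ⟨i.1, hAB i.2⟩]
  · rw [if_neg h]; split <;> simp [hp x]

lemma margAt_mono (p : (V → Λ) → ℝ) (hp : ∀ x, 0 ≤ p x) {A B : Finset V} (hAB : A ⊆ B)
    (x : V → Λ) : margAt p B x ≤ margAt p A x :=
  marg_mono p hp hAB (fun i => x i.1)

lemma sum_p_mul (p : (V → Λ) → ℝ) (A : Finset V) (g : (A → Λ) → ℝ) :
    ∑ x : V → Λ, p x * g (fun i => x i.1) = ∑ y : A → Λ, marg p A y * g y := by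
  unfold marg
  simp_rw [Finset.sum_mul, ite_mul, zero_mul]
  rw [Finset.sum_comm]
  refine Finset.sum_congr rfl fun x _ => ?_
  have : ∀ y : A → Λ,
      (if ∀ i : A, x i.1 = y i then p x * g y else 0)
        = (if (fun i : A => x i.1) = y then p x * g y else 0) := by
    intro y
    congr 1
    simp [funext_iff]
  rw [Finset.sum_congr rfl fun y _ => this y,
    Finset.sum_ite_eq Finset.univ (fun i : A => x i.1) (fun y => p x * g y)]
  simp

lemma entH_marg (p : (V → Λ) → ℝ) (A : Finset V) :
    entH (marg p A) = -∑ x : V → Λ, p x * Real.log (margAt p A x) := by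
  have h := sum_p_mul p A (fun y => Real.log (marg p A y))
  unfold margAt
  rw [h]
  unfold entH
  simp [Real.negMulLog, Finset.sum_neg_distrib]

lemma sum_marg (p : (V → Λ) → ℝ) (hsum : ∑ x, p x = 1) (A : Finset V) :
    ∑ y : A → Λ, marg p A y = 1 := by
  have h := sum_p_mul p A (fun _ => 1)
  simpa [hsum] using h.symm

end aux

section aux2
variable {V Λ : Type*} [Fintype V] [DecidableEq V] [Fintype Λ] [DecidableEq Λ]

lemma splitDep (A B W : Finset V) (hA : A ⊆ W) (hB : B ⊆ W)
    (hW : ∀ i ∈ W, i ∈ A ∨ i ∈ B) (hd : ∀ i ∈ A, i ∉ B)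
    (F : (A → Λ) → (B → Λ) → ℝ) :
    ∑ y : W → Λ, F (fun i => y ⟨i.1, hA i.2⟩) (fun i => y ⟨i.1, hB i.2⟩)
      = ∑ v : A → Λ, ∑ w : B → Λ, F v w := by
  classical
  let e : (W → Λ) ≃ (A → Λ) × (B → Λ) :=
    { toFun := fun y => (fun i => y ⟨i.1, hA i.2⟩, fun i => y ⟨i.1, hB i.2⟩)
      invFun := fun vw => fun i =>
        if h : i.1 ∈ A then vw.1 ⟨i.1, h⟩ else vw.2 ⟨i.1, (hW i.1 i.2).resolve_left h⟩
      left_inv := by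
        intro y
        funext i
        by_cases h : i.1 ∈ A
        · simp only [dif_pos h]
        · simp only [dif_neg h]
      right_inv := by
        intro vw
        apply Prod.ext
        · funext i
          simp only [dif_pos i.2]
        · funext i
          have : i.1 ∉ A := fun h => hd i.1 h i.2
          simp only [dif_neg this]
    }
  exact (Fintype.sum_equiv e _ (fun vw => F vw.1 vw.2) (fun y => rfl)).trans
    (Fintype.sum_prod_type (fun vw => F vw.1 vw.2))

lemma sum_combine (p : (V → Λ) → ℝ) (C1 C2 : Finset V) (w : {i // i ∈ C2} → Λ) :
    ∑ v : (C1 \ C2 : Finset V) → Λ,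
      marg p C1 (fun i => if h : i.1 ∈ C2 then w ⟨i.1, h⟩
        else v ⟨i.1, Finset.mem_sdiff.mpr ⟨i.2, h⟩⟩)
      = marg p (C1 ∩ C2) (fun i => w ⟨i.1, Finset.mem_of_mem_inter_right i.2⟩) := by
  classical
  unfold marg
  rw [Finset.sum_comm]
  refine Finset.sum_congr rfl fun x _ => ?_
  have key : ∀ v : (C1 \ C2 : Finset V) → Λ,
      (∀ i : C1, x i.1 = if h : i.1 ∈ C2 then w ⟨i.1, h⟩
          else v ⟨i.1, Finset.mem_sdiff.mpr ⟨i.2, h⟩⟩)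
        ↔ ((∀ i : (C1 ∩ C2 : Finset V), x i.1 = w ⟨i.1, Finset.mem_of_mem_inter_right i.2⟩)
            ∧ (fun i : (C1 \ C2 : Finset V) => x i.1) = v) := by
    intro v
    constructor
    · intro h
      constructor
      · intro i
        have hi1 : i.1 ∈ C1 := Finset.mem_of_mem_inter_left i.2
        have hi2 : i.1 ∈ C2 := Finset.mem_of_mem_inter_right i.2
        have := h ⟨i.1, hi1⟩
        rw [this, dif_pos hi2]
      · funext i
        have hi1 : i.1 ∈ C1 := (Finset.mem_sdiff.mp i.2).1
        have hi2 : i.1 ∉ C2 := (Finset.mem_sdiff.mp i.2).2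
        have := h ⟨i.1, hi1⟩
        rw [this, dif_neg hi2]
    · rintro ⟨h1, h2⟩ i
      by_cases h : i.1 ∈ C2
      · rw [dif_pos h]
        exact h1 ⟨i.1, Finset.mem_inter.mpr ⟨i.2, h⟩⟩
      · rw [dif_neg h]
        rw [← h2]
  rw [Finset.sum_congr rfl fun v _ => by rw [if_congr (key v) rfl rfl]]
  by_cases hZ : ∀ i : (C1 ∩ C2 : Finset V), x i.1 = w ⟨i.1, Finset.mem_of_mem_inter_right i.2⟩
  · rw [if_pos hZ]
    rw [Finset.sum_congr rfl fun v _ => if_congr (and_iff_right hZ) rfl rfl]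
    rw [Finset.sum_ite_eq Finset.univ (fun i : (C1 \ C2 : Finset V) => x i.1) (fun _ => p x)]
    simp
  · rw [if_neg hZ]
    apply Finset.sum_eq_zero
    intro v _
    rw [if_neg]
    tauto
end aux2

section aux3
variable {V Λ : Type*} [Fintype V] [DecidableEq V] [Fintype Λ] [DecidableEq Λ]

lemma sum_ratio (p : (V → Λ) → ℝ) (hp : ∀ x, 0 ≤ p x) (hsum : ∑ x, p x = 1)
    (C1 C2 : Finset V) :
    ∑ y : {i // i ∈ C1 ∪ C2} → Λ,
      marg p C1 (fun i => y ⟨i.1, Finset.mem_union_left _ i.2⟩) *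
        (marg p C2 (fun i => y ⟨i.1, Finset.mem_union_right _ i.2⟩) /
          marg p (C1 ∩ C2)
            (fun i => y ⟨i.1, Finset.mem_union_left _ (Finset.mem_of_mem_inter_left i.2)⟩)) = 1 := by
  classical
  have hA : C1 \ C2 ⊆ C1 ∪ C2 := Finset.sdiff_subset.trans Finset.subset_union_left
  have hB : C2 ⊆ C1 ∪ C2 := Finset.subset_union_right
  have hW : ∀ i ∈ C1 ∪ C2, i ∈ C1 \ C2 ∨ i ∈ C2 := by
    intro i hi
    by_cases h : i ∈ C2
    · exact Or.inr h
    · rcases Finset.mem_union.mp hi with h1 | h2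
      · exact Or.inl (Finset.mem_sdiff.mpr ⟨h1, h⟩)
      · exact absurd h2 h
  have hd : ∀ i ∈ C1 \ C2, i ∉ C2 := fun i hi => (Finset.mem_sdiff.mp hi).2
  have hsplit := splitDep (Λ := Λ) (C1 \ C2) C2 (C1 ∪ C2) hA hB hW hd
    (fun v w => marg p C1 (fun i => if h : i.1 ∈ C2 then w ⟨i.1, h⟩
        else v ⟨i.1, Finset.mem_sdiff.mpr ⟨i.2, h⟩⟩) *
      (marg p C2 w / marg p (C1 ∩ C2) (fun i => w ⟨i.1, Finset.mem_of_mem_inter_right i.2⟩)))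
  calc
    ∑ y : {i // i ∈ C1 ∪ C2} → Λ,
      marg p C1 (fun i => y ⟨i.1, Finset.mem_union_left _ i.2⟩) *
        (marg p C2 (fun i => y ⟨i.1, Finset.mem_union_right _ i.2⟩) /
          marg p (C1 ∩ C2)
            (fun i => y ⟨i.1, Finset.mem_union_left _ (Finset.mem_of_mem_inter_left i.2)⟩))
      = ∑ y : {i // i ∈ C1 ∪ C2} → Λ,
          marg p C1 (fun i => if h : i.1 ∈ C2 then y ⟨i.1, hB h⟩
            else y ⟨i.1, hA (Finset.mem_sdiff.mpr ⟨i.2, h⟩)⟩) *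
          (marg p C2 (fun i => y ⟨i.1, hB i.2⟩) /
            marg p (C1 ∩ C2) (fun i => y ⟨i.1, Finset.mem_union_left _ (Finset.mem_of_mem_inter_left i.2)⟩)) := by
        refine Finset.sum_congr rfl fun y _ => ?_
        congr 2
        funext i
        by_cases h : i.1 ∈ C2
        · rw [dif_pos h]
        · rw [dif_neg h]
    _ = ∑ v : {i // i ∈ C1 \ C2} → Λ, ∑ w : {i // i ∈ C2} → Λ,
          marg p C1 (fun i => if h : i.1 ∈ C2 then w ⟨i.1, h⟩
            else v ⟨i.1, Finset.mem_sdiff.mpr ⟨i.2, h⟩⟩) *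
          (marg p C2 w / marg p (C1 ∩ C2) (fun i => w ⟨i.1, Finset.mem_of_mem_inter_right i.2⟩)) :=
        hsplit
    _ = ∑ w : {i // i ∈ C2} → Λ, ∑ v : {i // i ∈ C1 \ C2} → Λ,
          marg p C1 (fun i => if h : i.1 ∈ C2 then w ⟨i.1, h⟩
            else v ⟨i.1, Finset.mem_sdiff.mpr ⟨i.2, h⟩⟩) *
          (marg p C2 w / marg p (C1 ∩ C2) (fun i => w ⟨i.1, Finset.mem_of_mem_inter_right i.2⟩)) :=
        Finset.sum_comm
    _ = ∑ w : {i // i ∈ C2} → Λ,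
          marg p (C1 ∩ C2) (fun i => w ⟨i.1, Finset.mem_of_mem_inter_right i.2⟩) *
          (marg p C2 w / marg p (C1 ∩ C2) (fun i => w ⟨i.1, Finset.mem_of_mem_inter_right i.2⟩)) := by
        refine Finset.sum_congr rfl fun w _ => ?_
        rw [← Finset.sum_mul, sum_combine p C1 C2 w]
    _ = ∑ w : {i // i ∈ C2} → Λ, marg p C2 w := by
        refine Finset.sum_congr rfl fun w _ => ?_
        by_cases hc : marg p (C1 ∩ C2) (fun i => w ⟨i.1, Finset.mem_of_mem_inter_right i.2⟩) = 0
        · have hle : marg p C2 w ≤ marg p (C1 ∩ C2)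
              (fun i => w ⟨i.1, Finset.mem_of_mem_inter_right i.2⟩) :=
            marg_mono p hp Finset.inter_subset_right w
          have : marg p C2 w = 0 :=
            le_antisymm (hc ▸ hle) (marg_nonneg p hp C2 w)
          rw [hc, this]; ring
        · rw [mul_comm, div_mul_cancel₀ _ hc]
    _ = 1 := sum_marg p hsum C2
end aux3


set_option maxHeartbeats 1000000

/-- equality `I(X_{C₁∪C₂}) + I(X_{C₁∩C₂}) = I(X_{C₁}) + I(X_{C₂})` holds
iff `X_{C₁\C₂}` and `X_{C₂\C₁}` are conditionally independent given `X_{C₁∩C₂}`,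
i.e. iff `P(x_{C₁∪C₂})·P(x_{C₁∩C₂}) = P(x_{C₁})·P(x_{C₂})` for all `x`. -/
theorem info_modular_iff_condIndep {V Λ : Type*} [Fintype V] [DecidableEq V] [Fintype Λ] [DecidableEq Λ]
    (p : (V → Λ) → ℝ) (hp : ∀ x, 0 ≤ p x) (hsum : ∑ x, p x = 1)
    (C1 C2 : Finset V) :
    info p (C1 ∪ C2) + info p (C1 ∩ C2) = info p C1 + info p C2
      ↔ ∀ x : V → Λ,
          margAt p (C1 ∪ C2) x * margAt p (C1 ∩ C2) x = margAt p C1 x * margAt p C2 x := by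
  classical
  have h1 : C1 ⊆ C1 ∪ C2 := Finset.subset_union_left
  have h2 : C2 ⊆ C1 ∪ C2 := Finset.subset_union_right
  have hZ1 : C1 ∩ C2 ⊆ C1 := Finset.inter_subset_left
  have hZU : C1 ∩ C2 ⊆ C1 ∪ C2 := hZ1.trans h1
  have hinfo : (info p (C1 ∪ C2) + info p (C1 ∩ C2) = info p C1 + info p C2) ↔
      entH (marg p C1) + entH (marg p C2) - entH (marg p (C1 ∪ C2)) - entH (marg p (C1 ∩ C2))
        = 0 := by
    unfold info
    have hs := Finset.sum_union_inter (s₁ := C1) (s₂ := C2) (f := fun i => entH (marg p {i}))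
    constructor <;> intro h <;> linarith
  rw [hinfo]
  have hpos : ∀ x : V → Λ, 0 < p x →
      0 < margAt p (C1 ∪ C2) x ∧ 0 < margAt p (C1 ∩ C2) x ∧
        0 < margAt p C1 x ∧ 0 < margAt p C2 x := by
    intro x hx
    have hU : 0 < margAt p (C1 ∪ C2) x := lt_of_lt_of_le hx (le_margAt p hp _ x)
    exact ⟨hU, lt_of_lt_of_le hU (margAt_mono p hp hZU x),
      lt_of_lt_of_le hU (margAt_mono p hp h1 x), lt_of_lt_of_le hU (margAt_mono p hp h2 x)⟩
  have hΔ : entH (marg p C1) + entH (marg p C2) - entH (marg p (C1 ∪ C2))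
        - entH (marg p (C1 ∩ C2))
      = ∑ x : V → Λ, p x * Real.log (margAt p (C1 ∪ C2) x * margAt p (C1 ∩ C2) x /
          (margAt p C1 x * margAt p C2 x)) := by
    rw [entH_marg p C1, entH_marg p C2, entH_marg p (C1 ∪ C2), entH_marg p (C1 ∩ C2)]
    have hterm : ∀ x : V → Λ, p x * Real.log (margAt p (C1 ∪ C2) x * margAt p (C1 ∩ C2) x /
          (margAt p C1 x * margAt p C2 x))
        = p x * Real.log (margAt p (C1 ∪ C2) x) + p x * Real.log (margAt p (C1 ∩ C2) x)
          - p x * Real.log (margAt p C1 x) - p x * Real.log (margAt p C2 x) := by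
      intro x
      rcases eq_or_lt_of_le (hp x) with h0 | h0
      · rw [← h0]; ring
      · obtain ⟨hU, hZ, hc1, hc2⟩ := hpos x h0
        rw [Real.log_div (ne_of_gt (mul_pos hU hZ)) (ne_of_gt (mul_pos hc1 hc2)),
          Real.log_mul (ne_of_gt hU) (ne_of_gt hZ),
          Real.log_mul (ne_of_gt hc1) (ne_of_gt hc2)]
        ring
    rw [Finset.sum_congr rfl fun x _ => hterm x, Finset.sum_sub_distrib, Finset.sum_sub_distrib,
      Finset.sum_add_distrib]
    ring
  rw [hΔ]
  constructor
  · intro h0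
    have hsr := sum_ratio p hp hsum C1 C2
    have hQF : ∀ y : {i // i ∈ C1 ∪ C2} → Λ,
        marg p (C1 ∪ C2) y *
          (marg p C1 (fun i => y ⟨i.1, Finset.mem_union_left _ i.2⟩) *
            marg p C2 (fun i => y ⟨i.1, Finset.mem_union_right _ i.2⟩) /
            (marg p (C1 ∪ C2) y *
              marg p (C1 ∩ C2) (fun i =>
                y ⟨i.1, Finset.mem_union_left _ (Finset.mem_of_mem_inter_left i.2)⟩)))
        ≤ marg p C1 (fun i => y ⟨i.1, Finset.mem_union_left _ i.2⟩) *
          (marg p C2 (fun i => y ⟨i.1, Finset.mem_union_right _ i.2⟩) /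
            marg p (C1 ∩ C2) (fun i =>
              y ⟨i.1, Finset.mem_union_left _ (Finset.mem_of_mem_inter_left i.2)⟩)) := by
      intro y
      by_cases hq : marg p (C1 ∪ C2) y = 0
      · rw [hq, zero_mul]
        exact mul_nonneg (marg_nonneg p hp _ _)
          (div_nonneg (marg_nonneg p hp _ _) (marg_nonneg p hp _ _))
      · have hQpos : 0 < marg p (C1 ∪ C2) y :=
          lt_of_le_of_ne (marg_nonneg p hp _ y) (Ne.symm hq)
        have hCpos : 0 < marg p (C1 ∩ C2) (fun i =>
            y ⟨i.1, Finset.mem_union_left _ (Finset.mem_of_mem_inter_left i.2)⟩) :=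
          lt_of_lt_of_le hQpos (marg_mono p hp hZU y)
        apply le_of_eq
        field_simp
    have hT : ∑ x : V → Λ, p x *
        (margAt p C1 x * margAt p C2 x / (margAt p (C1 ∪ C2) x * margAt p (C1 ∩ C2) x))
        = ∑ y : {i // i ∈ C1 ∪ C2} → Λ, marg p (C1 ∪ C2) y *
            (marg p C1 (fun i => y ⟨i.1, Finset.mem_union_left _ i.2⟩) *
              marg p C2 (fun i => y ⟨i.1, Finset.mem_union_right _ i.2⟩) /
              (marg p (C1 ∪ C2) y *
                marg p (C1 ∩ C2) (fun i =>
                  y ⟨i.1, Finset.mem_union_left _ (Finset.mem_of_mem_inter_left i.2)⟩))) :=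
      sum_p_mul p (C1 ∪ C2) (fun y =>
        marg p C1 (fun i => y ⟨i.1, Finset.mem_union_left _ i.2⟩) *
          marg p C2 (fun i => y ⟨i.1, Finset.mem_union_right _ i.2⟩) /
          (marg p (C1 ∪ C2) y *
            marg p (C1 ∩ C2) (fun i =>
              y ⟨i.1, Finset.mem_union_left _ (Finset.mem_of_mem_inter_left i.2)⟩)))
    have hTle : ∑ x : V → Λ, p x *
        (margAt p C1 x * margAt p C2 x / (margAt p (C1 ∪ C2) x * margAt p (C1 ∩ C2) x)) ≤ 1 := by
      rw [hT]
      exact le_trans (Finset.sum_le_sum fun y _ => hQF y) (le_of_eq hsr)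
    have hHle : ∀ x : V → Λ, p x *
        (1 - margAt p C1 x * margAt p C2 x / (margAt p (C1 ∪ C2) x * margAt p (C1 ∩ C2) x))
        ≤ p x * Real.log (margAt p (C1 ∪ C2) x * margAt p (C1 ∩ C2) x /
            (margAt p C1 x * margAt p C2 x)) := by
      intro x
      rcases eq_or_lt_of_le (hp x) with hx0 | hx0
      · rw [← hx0]; simp
      · obtain ⟨hU, hZ, hc1, hc2⟩ := hpos x hx0
        have ht : 0 < margAt p C1 x * margAt p C2 x /
            (margAt p (C1 ∪ C2) x * margAt p (C1 ∩ C2) x) :=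
          div_pos (mul_pos hc1 hc2) (mul_pos hU hZ)
        have hlog := Real.log_le_sub_one_of_pos ht
        have hinv : margAt p (C1 ∪ C2) x * margAt p (C1 ∩ C2) x /
              (margAt p C1 x * margAt p C2 x)
            = (margAt p C1 x * margAt p C2 x /
                (margAt p (C1 ∪ C2) x * margAt p (C1 ∩ C2) x))⁻¹ := (inv_div _ _).symm
        rw [hinv, Real.log_inv]
        have h1t : 1 - margAt p C1 x * margAt p C2 x /
              (margAt p (C1 ∪ C2) x * margAt p (C1 ∩ C2) x)
            ≤ -Real.log (margAt p C1 x * margAt p C2 x /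
              (margAt p (C1 ∪ C2) x * margAt p (C1 ∩ C2) x)) := by linarith
        exact mul_le_mul_of_nonneg_left h1t (hp x)
    have hsumH : ∑ x : V → Λ, p x *
        (1 - margAt p C1 x * margAt p C2 x / (margAt p (C1 ∪ C2) x * margAt p (C1 ∩ C2) x))
        = 1 - ∑ x : V → Λ, p x *
            (margAt p C1 x * margAt p C2 x / (margAt p (C1 ∪ C2) x * margAt p (C1 ∩ C2) x)) := by
      simp only [mul_sub, mul_one]
      rw [Finset.sum_sub_distrib, hsum]
    have hHsum0 : ∑ x : V → Λ, p x *
        (1 - margAt p C1 x * margAt p C2 x / (margAt p (C1 ∪ C2) x * margAt p (C1 ∩ C2) x))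
        = 0 := by
      have hle1 := Finset.sum_le_sum (s := Finset.univ) (f := fun x : V → Λ => p x *
        (1 - margAt p C1 x * margAt p C2 x / (margAt p (C1 ∪ C2) x * margAt p (C1 ∩ C2) x)))
        (g := fun x : V → Λ => p x * Real.log (margAt p (C1 ∪ C2) x * margAt p (C1 ∩ C2) x /
            (margAt p C1 x * margAt p C2 x)))
        (fun x _ => hHle x)
      rw [h0] at hle1
      rw [hsumH]
      rw [hsumH] at hle1
      linarith
    have hTeq : ∑ x : V → Λ, p x *
        (margAt p C1 x * margAt p C2 x / (margAt p (C1 ∪ C2) x * margAt p (C1 ∩ C2) x)) = 1 := by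
      rw [hsumH] at hHsum0
      linarith
    have hpt := (Finset.sum_eq_zero_iff_of_nonneg (f := fun x : V → Λ =>
        p x * Real.log (margAt p (C1 ∪ C2) x * margAt p (C1 ∩ C2) x /
          (margAt p C1 x * margAt p C2 x))
        - p x * (1 - margAt p C1 x * margAt p C2 x /
            (margAt p (C1 ∪ C2) x * margAt p (C1 ∩ C2) x)))
      (fun x _ => sub_nonneg.mpr (hHle x))).mp
      (by rw [Finset.sum_sub_distrib, h0, hHsum0]; ring)
    have hpty := (Finset.sum_eq_zero_iff_of_nonneg (f := fun y : {i // i ∈ C1 ∪ C2} → Λ =>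
        marg p C1 (fun i => y ⟨i.1, Finset.mem_union_left _ i.2⟩) *
          (marg p C2 (fun i => y ⟨i.1, Finset.mem_union_right _ i.2⟩) /
            marg p (C1 ∩ C2) (fun i =>
              y ⟨i.1, Finset.mem_union_left _ (Finset.mem_of_mem_inter_left i.2)⟩))
        - marg p (C1 ∪ C2) y *
          (marg p C1 (fun i => y ⟨i.1, Finset.mem_union_left _ i.2⟩) *
            marg p C2 (fun i => y ⟨i.1, Finset.mem_union_right _ i.2⟩) /
            (marg p (C1 ∪ C2) y *
              marg p (C1 ∩ C2) (fun i =>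
                y ⟨i.1, Finset.mem_union_left _ (Finset.mem_of_mem_inter_left i.2)⟩))))
      (fun y _ => sub_nonneg.mpr (hQF y))).mp
      (by rw [Finset.sum_sub_distrib, hsr, ← hT, hTeq]; ring)
    have key1 : ∀ x : V → Λ, 0 < p x →
        margAt p (C1 ∪ C2) x * margAt p (C1 ∩ C2) x = margAt p C1 x * margAt p C2 x := by
      intro x hx
      obtain ⟨hU, hZ, hc1, hc2⟩ := hpos x hx
      have h := sub_eq_zero.mp (hpt x (Finset.mem_univ x))
      have h' := mul_left_cancel₀ (ne_of_gt hx) h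
      have hinv : margAt p (C1 ∪ C2) x * margAt p (C1 ∩ C2) x /
            (margAt p C1 x * margAt p C2 x)
          = (margAt p C1 x * margAt p C2 x /
              (margAt p (C1 ∪ C2) x * margAt p (C1 ∩ C2) x))⁻¹ := (inv_div _ _).symm
      rw [hinv, Real.log_inv] at h'
      have ht : 0 < margAt p C1 x * margAt p C2 x /
          (margAt p (C1 ∪ C2) x * margAt p (C1 ∩ C2) x) :=
        div_pos (mul_pos hc1 hc2) (mul_pos hU hZ)
      have hteq : margAt p C1 x * margAt p C2 x /
          (margAt p (C1 ∪ C2) x * margAt p (C1 ∩ C2) x) = 1 := by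
        by_contra hne
        have := Real.log_lt_sub_one_of_pos ht hne
        linarith
      have hne : margAt p (C1 ∪ C2) x * margAt p (C1 ∩ C2) x ≠ 0 := ne_of_gt (mul_pos hU hZ)
      field_simp at hteq
      linarith
    have key2 : ∀ y : {i // i ∈ C1 ∪ C2} → Λ, marg p (C1 ∪ C2) y = 0 →
        marg p C1 (fun i => y ⟨i.1, Finset.mem_union_left _ i.2⟩) *
          marg p C2 (fun i => y ⟨i.1, Finset.mem_union_right _ i.2⟩) = 0 := by
      intro y hq
      have h := hpty y (Finset.mem_univ y)
      rw [hq, zero_mul, sub_zero] at h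
      rcases mul_eq_zero.mp h with h' | h'
      · rw [h', zero_mul]
      · rcases div_eq_zero_iff.mp h' with h'' | h''
        · rw [h'', mul_zero]
        · have hB1le : marg p C1 (fun i => y ⟨i.1, Finset.mem_union_left _ i.2⟩) ≤
              marg p (C1 ∩ C2) (fun i =>
                y ⟨i.1, Finset.mem_union_left _ (Finset.mem_of_mem_inter_left i.2)⟩) :=
            marg_mono p hp hZ1 (fun i => y ⟨i.1, Finset.mem_union_left _ i.2⟩)
          have : marg p C1 (fun i => y ⟨i.1, Finset.mem_union_left _ i.2⟩) = 0 :=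
            le_antisymm (h'' ▸ hB1le) (marg_nonneg p hp _ _)
          rw [this, zero_mul]
    intro x
    by_cases hq : marg p (C1 ∪ C2) (fun i : {i // i ∈ C1 ∪ C2} => x i.1) = 0
    · have hU0 : margAt p (C1 ∪ C2) x = 0 := hq
      have h' : margAt p C1 x * margAt p C2 x = 0 := key2 (fun i => x i.1) hq
      rw [hU0, zero_mul, h']
    · have hq' : ∑ x' : V → Λ,
          (if ∀ i : {i // i ∈ C1 ∪ C2}, x' i.1 = x i.1 then p x' else 0) ≠ 0 := hq
      obtain ⟨x', -, hx'⟩ := Finset.exists_ne_zero_of_sum_ne_zero hq'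
      have hcond : ∀ i : {i // i ∈ C1 ∪ C2}, x' i.1 = x i.1 := by
        by_contra hcond
        rw [if_neg hcond] at hx'
        exact hx' rfl
      have hpx' : 0 < p x' := by
        rw [if_pos hcond] at hx'
        exact lt_of_le_of_ne (hp x') (Ne.symm hx')
      have heqA : ∀ A : Finset V, A ⊆ C1 ∪ C2 → margAt p A x' = margAt p A x := by
        intro A hA
        unfold margAt
        congr 1
        funext i
        exact hcond ⟨i.1, hA i.2⟩
      have hk := key1 x' hpx'
      rw [heqA (C1 ∪ C2) (subset_refl _), heqA (C1 ∩ C2) hZU, heqA C1 h1, heqA C2 h2] at hk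
      exact hk
  · intro hcond
    apply Finset.sum_eq_zero
    intro x _
    rcases eq_or_lt_of_le (hp x) with h0 | h0
    · rw [← h0]; ring
    · obtain ⟨hU, hZ, hc1, hc2⟩ := hpos x h0
      rw [hcond x, div_self (ne_of_gt (mul_pos hc1 hc2)), Real.log_one, mul_zero]
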